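/- arXiv:2304.01284 — 7 statements merged into one kernel-verified Lean document; each statement's English description precedes it below -/
import Mathlib

section
/- The least fixed point of the expectation-transformer functional for the procedure balls applied to the identity post-expectation yields the expected return value n/5: the least function T : ℕ → (ℕ → ℝ≥0∞) → ℝ≥0∞ satisfying T n f = (1/5)·T (n-1) (λ b, f (b+1)) + (4/5)·T (n-1) f for n > 0, and T 0 f = f 0, satisfies T n (λ b, b) = n/5 for all n. -/
open ENNReal

theorem stmt_5 (T : ℕ → (ℕ → ℝ≥0∞) → ℝ≥0∞)
    (hrec : ∀ n f, 0 < n →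
      T n f = (1/5) * T (n-1) (fun b => f (b+1)) + (4/5) * T (n-1) f)
    (hzero : ∀ f, T 0 f = f 0)
    (hleast : ∀ T' : ℕ → (ℕ → ℝ≥0∞) → ℝ≥0∞,
      (∀ n f, 0 < n →
        T' n f = (1/5) * T' (n-1) (fun b => f (b+1)) + (4/5) * T' (n-1) f) →
      (∀ f, T' 0 f = f 0) → ∀ n f, T n f ≤ T' n f) :
    ∀ n : ℕ, T n (fun b => (b : ℝ≥0∞)) = n / 5 := by
  have key : ∀ n : ℕ, ∀ c : ℝ≥0∞, T n (fun b => (b : ℝ≥0∞) + c) = n / 5 + c := by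
    intro n
    induction n with
    | zero => intro c; rw [hzero]; simp
    | succ n ih =>
      intro c
      rw [hrec (n+1) _ (Nat.succ_pos n)]
      simp only [Nat.add_sub_cancel]
      have h1 : (fun b => ((b+1 : ℕ) : ℝ≥0∞) + c) = (fun (b : ℕ) => (b : ℝ≥0∞) + (c+1)) := by
        funext b; push_cast; ring
      rw [h1, ih (c+1), ih c]
      push_cast
      rw [ENNReal.add_div]
      have h5 : (1:ℝ≥0∞)/5 + 4/5 = 1 := by
        rw [ENNReal.div_add_div_same]; norm_num
        exact ENNReal.div_self (by norm_num) (by norm_num)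
      calc (1/5) * (↑n/5 + (c+1)) + (4/5) * (↑n/5 + c)
          = (1/5 + 4/5) * (↑n/5 + c) + 1/5 := by ring
        _ = ↑n/5 + 1/5 + c := by rw [h5]; ring
  intro n
  have := key n 0
  simpa using this
end

section
/- Binomial update invariant: the least function W : ℕ × ℕ × ℕ → ℝ≥0∞ satisfying W (x, n, N) = (1/2)·W (x+1, n+1, N) + (1/2)·W (x, n+1, N) when n < N, and W (x, n, N) = x when n ≥ N, satisfies W (0, 0, N) = N/2 for all N. -/
open ENNReal

theorem stmt_9 (W : ℕ × ℕ × ℕ → ℝ≥0∞)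
    (hrec : ∀ x n N : ℕ, n < N →
      W (x, n, N) = (1/2) * W (x+1, n+1, N) + (1/2) * W (x, n+1, N))
    (hend : ∀ x n N : ℕ, N ≤ n → W (x, n, N) = (x : ℝ≥0∞))
    (hleast : ∀ W' : ℕ × ℕ × ℕ → ℝ≥0∞,
      (∀ x n N : ℕ, n < N →
        W' (x, n, N) = (1/2) * W' (x+1, n+1, N) + (1/2) * W' (x, n+1, N)) →
      (∀ x n N : ℕ, N ≤ n → W' (x, n, N) = (x : ℝ≥0∞)) → W ≤ W') :
    ∀ N : ℕ, W (0, 0, N) = N / 2 := by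
  have key : ∀ k x n : ℕ, W (x, n, n + k) = ((2 * x + k : ℕ) : ℝ≥0∞) / 2 := by
    intro k
    induction k with
    | zero =>
      intro x n
      rw [hend x n (n + 0) (by omega)]
      rw [eq_div_iff (by norm_num) (by norm_num)]
      push_cast
      ring
    | succ k ih =>
      intro x n
      rw [hrec x n (n + (k + 1)) (by omega)]
      have h1 : W (x + 1, n + 1, n + (k + 1)) = ((2 * (x + 1) + k : ℕ) : ℝ≥0∞) / 2 := by
        have := ih (x + 1) (n + 1); rwa [show n + 1 + k = n + (k + 1) by omega] at this
      have h2 : W (x, n + 1, n + (k + 1)) = ((2 * x + k : ℕ) : ℝ≥0∞) / 2 := by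
        have := ih x (n + 1); rwa [show n + 1 + k = n + (k + 1) by omega] at this
      rw [h1, h2, eq_div_iff (by norm_num : (2:ℝ≥0∞) ≠ 0) (by norm_num)]
      rw [mul_add, one_div, ← mul_assoc, ← mul_assoc,
        ENNReal.mul_inv_cancel (by norm_num) (by norm_num), one_mul, one_mul,
        ENNReal.div_add_div_same]
      rw [eq_comm, eq_div_iff (by norm_num : (2:ℝ≥0∞) ≠ 0) (by norm_num)]
      push_cast
      ring
  intro N
  have := key N 0 0
  simpa using this
end

section
/- More generally, the binomial-update loop expectation satisfies W (x, n, N) = x + (N - n)/2 for all n ≤ N, where W is the least solution of W (x,n,N) = (1/2)·W (x+1,n+1,N) + (1/2)·W (x,n+1,N) for n < N and W (x,n,N) = x for n ≥ N. -/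
open ENNReal

theorem stmt_10 (W : ℕ × ℕ × ℕ → ℝ≥0∞)
    (hrec : ∀ x n N : ℕ, n < N →
      W (x, n, N) = (1/2) * W (x+1, n+1, N) + (1/2) * W (x, n+1, N))
    (hend : ∀ x n N : ℕ, N ≤ n → W (x, n, N) = (x : ℝ≥0∞))
    (hleast : ∀ W' : ℕ × ℕ × ℕ → ℝ≥0∞,
      (∀ x n N : ℕ, n < N →
        W' (x, n, N) = (1/2) * W' (x+1, n+1, N) + (1/2) * W' (x, n+1, N)) →
      (∀ x n N : ℕ, N ≤ n → W' (x, n, N) = (x : ℝ≥0∞)) → W ≤ W') :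
    ∀ x n N : ℕ, n ≤ N → W (x, n, N) = (x : ℝ≥0∞) + ((N - n : ℕ) : ℝ≥0∞) / 2 := by
  have key : ∀ k : ℕ, ∀ x n N : ℕ, n ≤ N → N - n = k →
      W (x, n, N) = (x : ℝ≥0∞) + ((k : ℕ) : ℝ≥0∞) / 2 := by
    intro k
    induction k with
    | zero =>
      intro x n N hle hk
      have hNn : N ≤ n := by omega
      simp [hend x n N hNn]
    | succ m ih =>
      intro x n N hle hk
      have hlt : n < N := by omega
      have h1 : W (x+1, n+1, N) = ((x:ℝ≥0∞)+1) + (m:ℝ≥0∞)/2 := by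
        have := ih (x+1) (n+1) N (by omega) (by omega)
        rw [this]; push_cast; ring
      have h2 : W (x, n+1, N) = (x:ℝ≥0∞) + (m:ℝ≥0∞)/2 := by
        exact ih x (n+1) N (by omega) (by omega)
      rw [hrec x n N hlt, h1, h2]
      have h2ne : (2:ℝ≥0∞) ≠ 0 := by norm_num
      have h2nt : (2:ℝ≥0∞) ≠ ⊤ := by norm_num
      simp only [div_eq_mul_inv, one_mul]
      have hhalf : (2:ℝ≥0∞)⁻¹ + 2⁻¹ = 1 := by
        rw [← two_mul, ENNReal.mul_inv_cancel h2ne h2nt]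
      push_cast
      calc (2:ℝ≥0∞)⁻¹ * ((x:ℝ≥0∞) + 1 + (m:ℝ≥0∞) * 2⁻¹) + 2⁻¹ * ((x:ℝ≥0∞) + (m:ℝ≥0∞) * 2⁻¹)
          = (2⁻¹ + 2⁻¹) * (x:ℝ≥0∞) + (2⁻¹ + 2⁻¹) * ((m:ℝ≥0∞) * 2⁻¹) + 2⁻¹ := by ring
        _ = (x:ℝ≥0∞) + ((m:ℝ≥0∞) + 1) * 2⁻¹ := by rw [hhalf]; ring
  intro x n N hle
  exact key (N - n) x n N hle rfl
end

section
/- Hire-assistant expected number of hires: the least function T : ℕ → (ℕ → ℝ≥0∞) → ℝ≥0∞ satisfying T n f = T (n-1) (λ h, (1/n)·f (h+1) + (1 - 1/n)·f h) for n > 0 and T 0 f = f 0, satisfies T n (λ h, h) = ∑_{k=1}^{n} 1/k, the n-th harmonic number. -/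
open ENNReal

theorem stmt_15 (T : ℕ → (ℕ → ℝ≥0∞) → ℝ≥0∞)
    (hrec : ∀ n f, 0 < n →
      T n f = T (n-1) (fun h => (1/(n : ℝ≥0∞)) * f (h+1) + (1 - 1/(n : ℝ≥0∞)) * f h))
    (hzero : ∀ f, T 0 f = f 0)
    (hleast : ∀ T' : ℕ → (ℕ → ℝ≥0∞) → ℝ≥0∞,
      (∀ n f, 0 < n →
        T' n f = T' (n-1) (fun h => (1/(n : ℝ≥0∞)) * f (h+1) + (1 - 1/(n : ℝ≥0∞)) * f h)) →
      (∀ f, T' 0 f = f 0) → ∀ n f, T n f ≤ T' n f) :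
    ∀ n : ℕ, T n (fun h => (h : ℝ≥0∞)) = ∑ k ∈ Finset.Icc 1 n, 1 / (k : ℝ≥0∞) := by
  have main : ∀ n : ℕ, ∀ c : ℝ≥0∞,
      T n (fun h => (h : ℝ≥0∞) + c) = c + ∑ k ∈ Finset.Icc 1 n, 1 / (k : ℝ≥0∞) := by
    intro n
    induction n with
    | zero => intro c; simp [hzero]
    | succ n ih =>
      intro c
      rw [hrec (n+1) _ (Nat.succ_pos n)]
      set a : ℝ≥0∞ := 1 / ((n+1 : ℕ) : ℝ≥0∞) with ha
      have hab : a + (1 - a) = 1 := by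
        apply add_tsub_cancel_of_le
        rw [ha]
        simp [ENNReal.div_le_iff_le_mul]
      have hfun : (fun h : ℕ => a * ((↑(h+1) : ℝ≥0∞) + c) + (1 - a) * ((h : ℝ≥0∞) + c))
          = fun h : ℕ => (h : ℝ≥0∞) + (c + a) := by
        funext h
        push_cast
        set b := 1 - a
        have : a * ((h : ℝ≥0∞) + 1 + c) + b * ((h : ℝ≥0∞) + c)
            = (a + b) * (h : ℝ≥0∞) + (a + b) * c + a := by ring
        rw [this, hab, one_mul, one_mul, add_assoc]
      simp only [Nat.add_sub_cancel]
      rw [hfun, ih (c + a), Finset.sum_Icc_succ_top (Nat.one_le_iff_ne_zero.mpr (Nat.succ_ne_zero n))]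
      rw [add_assoc, add_comm a]
  intro n
  have := main n 0
  simpa using this
end

section
/- The hire-assistant expectation is linearly bounded: with T as the least solution of T n f = T (n-1) (λ h, (1/n)·f(h+1) + (1-1/n)·f h) for n > 0 and T 0 f = f 0, for all n ∈ ℕ and r ∈ ℝ≥0 we have T n (λ h, h + r) ≤ n + r; in particular T n (λ h, h) ≤ n. -/
open ENNReal

theorem stmt_16 (T : ℕ → (ℕ → ℝ≥0∞) → ℝ≥0∞)
    (hrec : ∀ n f, 0 < n →
      T n f = T (n-1) (fun h => (1/(n : ℝ≥0∞)) * f (h+1) + (1 - 1/(n : ℝ≥0∞)) * f h))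
    (hzero : ∀ f, T 0 f = f 0)
    (hleast : ∀ T' : ℕ → (ℕ → ℝ≥0∞) → ℝ≥0∞,
      (∀ n f, 0 < n →
        T' n f = T' (n-1) (fun h => (1/(n : ℝ≥0∞)) * f (h+1) + (1 - 1/(n : ℝ≥0∞)) * f h)) →
      (∀ f, T' 0 f = f 0) → ∀ n f, T n f ≤ T' n f) :
    (∀ (n : ℕ) (r : NNReal), T n (fun h => (h : ℝ≥0∞) + r) ≤ (n : ℝ≥0∞) + r) ∧
      ∀ n : ℕ, T n (fun h => (h : ℝ≥0∞)) ≤ (n : ℝ≥0∞) := by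
  have key : ∀ (n : ℕ) (c : ℝ≥0∞), T n (fun h => (h : ℝ≥0∞) + c) ≤ (n : ℝ≥0∞) + c := by
    intro n
    induction n with
    | zero => intro c; rw [hzero]
    | succ n ih =>
      intro c
      rw [hrec _ _ n.succ_pos]
      simp only [Nat.add_sub_cancel, Nat.succ_sub_one]
      set a : ℝ≥0∞ := 1/((n+1 : ℕ) : ℝ≥0∞) with hadef
      have ha : a ≤ 1 := by
        rw [hadef, one_div, ENNReal.inv_le_one]
        exact_mod_cast Nat.one_le_iff_ne_zero.mpr (Nat.succ_ne_zero n)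
      have hfun : (fun h : ℕ => a * ((↑(h+1) : ℝ≥0∞) + c) + (1-a) * ((h : ℝ≥0∞) + c))
          = fun h : ℕ => (h : ℝ≥0∞) + (c + a) := by
        funext h
        push_cast
        rw [show ((h:ℝ≥0∞) + 1 + c) = ((h:ℝ≥0∞) + c) + 1 by ring]
        rw [mul_add, mul_one, add_right_comm, ← add_mul, add_tsub_cancel_of_le ha,
          one_mul, add_assoc]
      rw [hfun]
      calc T n (fun h : ℕ => (h : ℝ≥0∞) + (c + a)) ≤ (n : ℝ≥0∞) + (c + a) := ih _
        _ ≤ ((n+1 : ℕ) : ℝ≥0∞) + c := by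
            push_cast
            calc (n : ℝ≥0∞) + (c + a) ≤ (n : ℝ≥0∞) + (c + 1) := by
                  gcongr
              _ = (n : ℝ≥0∞) + 1 + c := by ring
  refine ⟨fun n r => key n r, fun n => ?_⟩
  have := key n 0
  simpa using this
end

section
/- Linearity of the loop expectation transformer for nonnegative scalars: let Φ be a linear ω-continuous operator on σ → ℝ≥0∞ (Φ (c·f + d·g) = c·Φ f + d·Φ g). Then the loop transformer W g = lfp (G ↦ λ s, if b s then Φ G s else g s) satisfies W (c·g₁ + d·g₂) = c·W g₁ + d·W g₂ for all c, d ∈ ℝ≥0 and g₁, g₂ : σ → ℝ≥0∞. -/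
open ENNReal

theorem stmt_18 {σ : Type*} (b : σ → Bool)
    (Φ : (σ → ℝ≥0∞) → (σ → ℝ≥0∞))
    (hc : ∀ g : ℕ → σ → ℝ≥0∞, Monotone g →
      Φ (fun s => ⨆ n, g n s) = fun s => ⨆ n, Φ (g n) s)
    (hlin : ∀ (c d : NNReal) (f g : σ → ℝ≥0∞),
      Φ (fun s => (c : ℝ≥0∞) * f s + (d : ℝ≥0∞) * g s)
        = fun s => (c : ℝ≥0∞) * Φ f s + (d : ℝ≥0∞) * Φ g s)
    (W : (σ → ℝ≥0∞) → (σ → ℝ≥0∞))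
    (hW : ∀ g, IsLeast {G : σ → ℝ≥0∞ | G = fun s => if b s then Φ G s else g s} (W g)) :
    ∀ (c d : NNReal) (g₁ g₂ : σ → ℝ≥0∞),
      W (fun s => (c : ℝ≥0∞) * g₁ s + (d : ℝ≥0∞) * g₂ s)
        = fun s => (c : ℝ≥0∞) * W g₁ s + (d : ℝ≥0∞) * W g₂ s := by
  -- Φ is monotone
  have hmono : ∀ f g : σ → ℝ≥0∞, f ≤ g → Φ f ≤ Φ g := by
    intro f g hfg
    have h1 : g = fun s => ((1 : NNReal) : ℝ≥0∞) * f s + ((1 : NNReal) : ℝ≥0∞) * (g s - f s) := by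
      funext s; simp [add_tsub_cancel_of_le (hfg s)]
    rw [h1, hlin]
    intro s; simp
  -- loop body functional
  set F : (σ → ℝ≥0∞) → (σ → ℝ≥0∞) → (σ → ℝ≥0∞) :=
    fun g G => fun s => if b s then Φ G s else g s with hF
  -- iterates
  set iter : (σ → ℝ≥0∞) → ℕ → (σ → ℝ≥0∞) := fun g n => (F g)^[n] 0 with hiter
  have iter_succ : ∀ g n, iter g (n + 1) = F g (iter g n) := by
    intro g n
    simp only [hiter, Function.iterate_succ_apply']
  have Fmono : ∀ g, Monotone (F g) := by
    intro g G₁ G₂ h s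
    simp only [hF]
    split
    · exact hmono _ _ h s
    · exact le_rfl
  have iter_mono : ∀ g, Monotone (iter g) := by
    intro g
    apply monotone_nat_of_le_succ
    intro n
    induction n with
    | zero => intro s; simp [hiter]
    | succ n ih =>
      rw [iter_succ, iter_succ]
      exact Fmono g ih
  -- W g = ⨆ n, iter g n
  have Wsup : ∀ g, W g = fun s => ⨆ n, iter g n s := by
    intro g
    obtain ⟨hfix, hle⟩ := hW g
    have hfixS : (fun s => ⨆ n, iter g n s) ∈
        {G : σ → ℝ≥0∞ | G = fun s => if b s then Φ G s else g s} := by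
      show (fun s => ⨆ n, iter g n s) = fun s => if b s then Φ (fun s => ⨆ n, iter g n s) s else g s
      rw [hc _ (iter_mono g)]
      funext s
      by_cases hb : b s
      · simp only [hb, if_true]
        have h1 : (⨆ n, iter g n s) = ⨆ n, iter g (n + 1) s := by
          apply le_antisymm
          · exact iSup_le fun n => le_iSup_of_le n (iter_mono g (Nat.le_succ n) s)
          · exact iSup_le fun n => le_iSup (fun n => iter g n s) (n + 1)
        rw [h1]
        congr 1
        funext n
        rw [iter_succ]
        simp [hF, hb]
      · simp only [hb, if_false, Bool.false_eq_true]
        apply le_antisymm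
        · apply iSup_le
          intro n
          induction n with
          | zero => simp [hiter]
          | succ n ih =>
            rw [iter_succ]
            simp [hF, hb]
        · have := le_iSup (fun n => iter g n s) 1
          refine le_trans ?_ this
          rw [show (1 : ℕ) = 0 + 1 from rfl, iter_succ]
          simp [hF, hb]
    apply le_antisymm
    · exact hle hfixS
    · intro s
      apply iSup_le
      intro n
      induction n generalizing s with
      | zero => simp [hiter]
      | succ n ih =>
        rw [iter_succ]
        calc F g (iter g n) s ≤ F g (W g) s := Fmono g (fun t => ih t) s
        _ = W g s := by simp only [hF]; exact (congrFun hfix s).symm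
  -- iterates are linear
  intro c d g₁ g₂
  have iter_lin : ∀ n, iter (fun s => (c : ℝ≥0∞) * g₁ s + (d : ℝ≥0∞) * g₂ s) n
      = fun s => (c : ℝ≥0∞) * iter g₁ n s + (d : ℝ≥0∞) * iter g₂ n s := by
    intro n
    induction n with
    | zero => funext s; simp [hiter]
    | succ n ih =>
      rw [iter_succ, iter_succ, iter_succ]
      funext s
      simp only [hF, ih]
      by_cases hb : b s
      · simp only [hb, if_true]
        rw [hlin c d (iter g₁ n) (iter g₂ n)]
      · simp [hb]
  rw [Wsup, Wsup, Wsup]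
  funext s
  simp only [iter_lin]
  rw [ENNReal.mul_iSup, ENNReal.mul_iSup,
    ENNReal.iSup_add_iSup_of_monotone
    (f := fun n => (c : ℝ≥0∞) * iter g₁ n s) (g := fun n => (d : ℝ≥0∞) * iter g₂ n s)
    (fun m n h => mul_le_mul_right (iter_mono g₁ h s) _)
    (fun m n h => mul_le_mul_right (iter_mono g₂ h s) _)]
end

section
/- Random walk expectation: the least function T : ℤ → ℝ≥0∞ satisfying T n = 1 + (1/2)·T (n-2) + (1/2)·T (n+1) for n > 1, and T n = 0 for n ≤ 1, satisfies T n ≤ 2·max(n,0) for all n ∈ ℤ, i.e., the expected return value of rdwalk(n) is at most 2n. -/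
open ENNReal

noncomputable def psi : ℝ := (1 - Real.sqrt 5)/2

lemma hq : psi^2 = psi + 1 := by
  have hs : (Real.sqrt 5)^2 = 5 := Real.sq_sqrt (by norm_num)
  unfold psi; nlinarith [hs]

lemma hpsi_lt : psi < 0 := by
  have h2 : (2:ℝ) < Real.sqrt 5 := by
    nlinarith [Real.sq_sqrt (show (0:ℝ) ≤ 5 by norm_num), Real.sqrt_nonneg 5]
  unfold psi; linarith

lemma hpsi_gt : -1 < psi := by
  have h3 : Real.sqrt 5 < 3 := by
    nlinarith [Real.sq_sqrt (show (0:ℝ) ≤ 5 by norm_num), Real.sqrt_nonneg 5]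
  unfold psi; linarith

lemma habs : |psi| ≤ 1 := abs_le.2 ⟨le_of_lt hpsi_gt, by linarith [hpsi_lt]⟩

lemma h3 : psi^3 = 2*psi + 1 := by linear_combination (psi+1)*hq
lemma h4 : psi^4 = 3*psi + 2 := by linear_combination (psi^2+psi+2)*hq
lemma h5 : psi^5 = 5*psi + 3 := by linear_combination (psi^3+psi^2+2*psi+3)*hq
lemma hgen (k : ℕ) : 2*psi^(k+5) = psi^(k+3) + psi^(k+6) := by
  linear_combination (-(psi-1) * psi^(k+3)) * hq

noncomputable def f : ℤ → ℝ := fun n => if n ≤ 1 then 0 else 2*(n:ℝ) + 2*psi - 2*psi^(n+1).toNat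

lemma f_eq (m : ℕ) : f ((m:ℤ)+2) = 2*(m+2:ℝ) + 2*psi - 2*psi^(m+3) := by
  have h1 : ¬ ((m:ℤ)+2 ≤ 1) := by omega
  have h2 : ((m:ℤ)+2+1).toNat = m+3 := by omega
  simp only [f, h1, if_false, h2]
  push_cast; ring

lemma pow_le_abs (k : ℕ) : psi ≤ psi^(k+1) := by
  have h1 : |psi^(k+1)| = |psi|^(k+1) := abs_pow _ _
  have h2 : |psi|^(k+1) ≤ |psi| := by
    calc |psi|^(k+1) ≤ |psi|^1 := pow_le_pow_of_le_one (abs_nonneg _) habs (by omega)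
    _ = |psi| := pow_one _
  have h3 : -|psi^(k+1)| ≤ psi^(k+1) := neg_abs_le _
  have h4 : |psi| = -psi := abs_of_nonpos (le_of_lt hpsi_lt)
  nlinarith [h1, h2, h3]

lemma psi_pow_le_one (k : ℕ) : psi^k ≤ 1 := by
  have : |psi^k| ≤ 1 := by rw [abs_pow]; exact pow_le_one₀ (abs_nonneg _) habs
  exact le_trans (le_abs_self _) this

lemma f_nonneg (n : ℤ) : 0 ≤ f n := by
  by_cases h : n ≤ 1
  · simp [f, h]
  · obtain ⟨m, rfl⟩ : ∃ m : ℕ, n = (m:ℤ)+2 := ⟨(n-2).toNat, by omega⟩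
    rw [f_eq]
    have := psi_pow_le_one (m+3)
    have := hpsi_gt
    push_cast
    nlinarith

lemma f_le (m : ℕ) : f ((m:ℤ)+2) ≤ 2*(m+2:ℝ) := by
  rw [f_eq]
  have := pow_le_abs (m+2)
  have h : m+2+1 = m+3 := by omega
  rw [h] at this
  linarith

lemma f_rec (n : ℤ) (hn : 1 < n) : f n = 1 + f (n-2)/2 + f (n+1)/2 := by
  obtain ⟨m, rfl⟩ : ∃ m : ℕ, n = (m:ℤ)+2 := ⟨(n-2).toNat, by omega⟩
  match m with
  | 0 =>
    have e1 : ((0:ℕ):ℤ)+2-2 = (0:ℤ) := by norm_num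
    have e2 : ((0:ℕ):ℤ)+2+1 = ((1:ℕ):ℤ)+2 := by norm_num
    rw [e1, e2, f_eq, f_eq, show f 0 = 0 by simp [f]]
    norm_num
    linear_combination (-2)*h3 + h4
  | 1 =>
    have e1 : ((1:ℕ):ℤ)+2-2 = (1:ℤ) := by norm_num
    have e2 : ((1:ℕ):ℤ)+2+1 = ((2:ℕ):ℤ)+2 := by norm_num
    rw [e1, e2, f_eq, f_eq, show f 1 = 0 by simp [f]]
    norm_num
    linear_combination (-2)*h4 + h5
  | k+2 =>
    have e1 : ((k+2:ℕ):ℤ)+2-2 = ((k:ℕ):ℤ)+2 := by push_cast; ring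
    have e2 : ((k+2:ℕ):ℤ)+2+1 = ((k+3:ℕ):ℤ)+2 := by push_cast; ring
    rw [e1, e2, f_eq, f_eq, f_eq,
       show k+2+3 = k+5 from by omega, show k+3+3 = k+6 from by omega]
    have := hgen k
    push_cast
    linarith

theorem stmt_19 (T : ℤ → ℝ≥0∞)
    (hrec : ∀ n : ℤ, 1 < n → T n = 1 + (1/2) * T (n-2) + (1/2) * T (n+1))
    (hbase : ∀ n : ℤ, n ≤ 1 → T n = 0)
    (hleast : ∀ T' : ℤ → ℝ≥0∞,
      (∀ n : ℤ, 1 < n → T' n = 1 + (1/2) * T' (n-2) + (1/2) * T' (n+1)) →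
      (∀ n : ℤ, n ≤ 1 → T' n = 0) → T ≤ T') :
    ∀ n : ℤ, T n ≤ 2 * (((max n 0).toNat : ℝ≥0∞)) := by
  set T' : ℤ → ℝ≥0∞ := fun n => ENNReal.ofReal (f n) with hT'
  have hrec' : ∀ n : ℤ, 1 < n → T' n = 1 + (1/2) * T' (n-2) + (1/2) * T' (n+1) := by
    intro n hn
    have hr := f_rec n hn
    simp only [hT']
    have hf2 := f_nonneg (n-2)
    have hf3 := f_nonneg (n+1)
    rw [hr, ENNReal.ofReal_add (by linarith) (by linarith),
        ENNReal.ofReal_add (by norm_num) (by linarith), ENNReal.ofReal_one,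
        ENNReal.ofReal_div_of_pos (by norm_num), ENNReal.ofReal_div_of_pos (by norm_num),
        ENNReal.ofReal_ofNat]
    rw [ENNReal.div_eq_inv_mul, ENNReal.div_eq_inv_mul]
    congr 1 <;> [skip; rw [one_div]] <;> rw [one_div]
  have hbase' : ∀ n : ℤ, n ≤ 1 → T' n = 0 := by
    intro n hn; simp [hT', f, hn]
  intro n
  refine le_trans (hleast T' hrec' hbase' n) ?_
  by_cases h : n ≤ 1
  · simp [hT', f, h]
  · obtain ⟨m, rfl⟩ : ∃ m : ℕ, n = (m:ℤ)+2 := ⟨(n-2).toNat, by omega⟩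
    have hmax : (max ((m:ℤ)+2) 0).toNat = m+2 := by omega
    rw [hmax]
    simp only [hT']
    calc ENNReal.ofReal (f ((m:ℤ)+2)) ≤ ENNReal.ofReal (2*(m+2:ℝ)) :=
          ENNReal.ofReal_le_ofReal (f_le m)
    _ = 2 * ((m+2:ℕ) : ℝ≥0∞) := by
          rw [show (2*(m+2:ℝ)) = ((2*(m+2):ℕ):ℝ) by push_cast; ring, ENNReal.ofReal_natCast]
          push_cast; ring
end
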